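/- arXiv:1211.3439 — 3 statements merged into one kernel-verified Lean document; each statement's English description precedes it below -/
import Mathlib

section
/- Let A be a real N×N doubly stochastic symmetric matrix with ‖A u‖_2 ≤ λ ‖u‖_2 for all u orthogonal to the all-ones vector, where λ > 0. Let V_t ⊆ [N] with |V_t| ≥ p_t N, and let I_{V_t} denote the diagonal projection onto coordinates in V_t. Suppose u is a nonnegative vector satisfying ‖u‖_2 ≤ (2/√(p' N)) ‖u‖_1 for some p' > 0, and λ ≤ p_t p' / 8. Then ‖I_{V_t} A u‖_1 ≥ (3 p_t / 4) ‖u‖_1. -/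
private lemma l1_sqrt (N : ℕ) (x : Fin N → ℝ) :
    ∑ i, |x i| ≤ Real.sqrt N * Real.sqrt (∑ i, (x i) ^ 2) := by
  have h := Finset.sum_mul_sq_le_sq_mul_sq Finset.univ (fun _ => (1 : ℝ)) (fun i => |x i|)
  simp only [one_mul, one_pow, Finset.sum_const, Finset.card_univ, Fintype.card_fin,
    nsmul_eq_mul, mul_one, sq_abs] at h
  have h1 : ∑ i, |x i| = Real.sqrt ((∑ i, |x i|) ^ 2) := by
    rw [Real.sqrt_sq (Finset.sum_nonneg fun i _ => abs_nonneg _)]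
  rw [h1, ← Real.sqrt_mul (Nat.cast_nonneg N)]
  exact Real.sqrt_le_sqrt h

set_option maxHeartbeats 1000000 in
theorem stmt_14 (N : ℕ) (hN : 0 < N) (A : Matrix (Fin N) (Fin N) ℝ)
    (hDS : A ∈ doublyStochastic ℝ (Fin N)) (hsymm : A.IsSymm)
    (lam : ℝ) (hlam : 0 < lam)
    (hspec : ∀ u : Fin N → ℝ, ∑ i, u i = 0 →
      Real.sqrt (∑ i, (A.mulVec u i) ^ 2) ≤ lam * Real.sqrt (∑ i, (u i) ^ 2))
    (Vt : Finset (Fin N)) (pt p' : ℝ) (hp' : 0 < p')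
    (hVt : pt * N ≤ (Vt.card : ℝ))
    (u : Fin N → ℝ) (hu : ∀ i, 0 ≤ u i)
    (hu2 : Real.sqrt (∑ i, (u i) ^ 2) ≤ 2 / Real.sqrt (p' * N) * ∑ i, |u i|)
    (hl : lam ≤ pt * p' / 8) :
    ∑ i ∈ Vt, |A.mulVec u i| ≥ 3 * pt / 4 * ∑ i, |u i| := by
  have hNR : (0 : ℝ) < N := by exact_mod_cast hN
  have habs : ∀ i, |u i| = u i := fun i => abs_of_nonneg (hu i)
  have hS1 : ∑ i, |u i| = ∑ i, u i := by simp [habs]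
  set S := ∑ i, u i with hSdef
  rw [hS1] at hu2 ⊢
  have hSnn : 0 ≤ S := Finset.sum_nonneg fun i _ => hu i
  have hLHSnn : 0 ≤ ∑ i ∈ Vt, |A.mulVec u i| :=
    Finset.sum_nonneg fun i _ => abs_nonneg _
  rcases le_or_gt pt 0 with hpt | hpt
  · nlinarith
  -- main case
  set c : ℝ := S / N with hc
  set v : Fin N → ℝ := fun i => u i - c with hv
  have hvsum : ∑ i, v i = 0 := by
    simp only [hv, Finset.sum_sub_distrib, Finset.sum_const, Finset.card_univ,
      Fintype.card_fin, nsmul_eq_mul, hc]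
    field_simp
    simp [hSdef]
  -- A u = A v + c
  have hAu : ∀ i, A.mulVec u i = A.mulVec v i + c := by
    intro i
    have hrow : ∑ j, A i j = 1 := sum_row_of_mem_doublyStochastic hDS i
    simp only [Matrix.mulVec, dotProduct, hv]
    have h1 : ∑ j, A i j * u j = ∑ j, (A i j * (u j - c) + A i j * c) := by
      congr 1; ext j; ring
    rw [h1, Finset.sum_add_distrib, ← Finset.sum_mul, hrow]
    ring
  -- norms
  have hNv : N * ∑ i, (v i) ^ 2 = N * (∑ i, (u i) ^ 2) - S ^ 2 := by
    have : ∑ i, (v i) ^ 2 = ∑ i, ((u i) ^ 2 - 2 * c * u i + c ^ 2) := by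
      congr 1; ext i; simp only [hv]; ring
    rw [this]
    simp only [Finset.sum_add_distrib, Finset.sum_sub_distrib, Finset.sum_const,
      Finset.card_univ, Fintype.card_fin, nsmul_eq_mul, ← Finset.mul_sum, ← hSdef, hc]
    field_simp
    ring
  have hu2nn : 0 ≤ ∑ i, (u i) ^ 2 := Finset.sum_nonneg fun i _ => sq_nonneg _
  have hv2nn : 0 ≤ ∑ i, (v i) ^ 2 := Finset.sum_nonneg fun i _ => sq_nonneg _
  -- squaring hu2 : ∑ u² ≤ 4 S² / (p' N)
  have hsqpN : Real.sqrt (p' * N) ^ 2 = p' * N :=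
    Real.sq_sqrt (by positivity)
  have hu2sq : p' * N * ∑ i, (u i) ^ 2 ≤ 4 * S ^ 2 := by
    have h0 : (0 : ℝ) ≤ 2 / Real.sqrt (p' * N) * S := le_trans (Real.sqrt_nonneg _) hu2
    have hsq := mul_self_le_mul_self (Real.sqrt_nonneg _) hu2
    rw [← pow_two, ← pow_two, Real.sq_sqrt hu2nn] at hsq
    have hpos : (0:ℝ) < Real.sqrt (p' * N) := Real.sqrt_pos.mpr (by positivity)
    have : (2 / Real.sqrt (p' * N) * S) ^ 2 = 4 * S ^ 2 / (p' * N) := by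
      rw [mul_pow, div_pow, hsqpN]; ring
    rw [this] at hsq
    calc p' * N * ∑ i, (u i) ^ 2 ≤ p' * N * (4 * S ^ 2 / (p' * N)) := by
          apply mul_le_mul_of_nonneg_left hsq; positivity
      _ = 4 * S ^ 2 := by field_simp
  -- bound E = ∑ |A v| by B
  set E := ∑ i, |A.mulVec v i| with hE
  set B := Real.sqrt N * (lam * Real.sqrt (∑ i, (v i) ^ 2)) with hB
  have hEB : E ≤ B := by
    calc E ≤ Real.sqrt N * Real.sqrt (∑ i, (A.mulVec v i) ^ 2) := l1_sqrt N _
      _ ≤ B := by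
          apply mul_le_mul_of_nonneg_left (hspec v hvsum) (Real.sqrt_nonneg _)
  have hBnn : 0 ≤ B := by
    apply mul_nonneg (Real.sqrt_nonneg _) (mul_nonneg hlam.le (Real.sqrt_nonneg _))
  have hB2 : B ^ 2 = N * (lam ^ 2 * ∑ i, (v i) ^ 2) := by
    rw [hB, mul_pow, mul_pow, Real.sq_sqrt (Nat.cast_nonneg N), Real.sq_sqrt hv2nn]
  have hB2le : B ^ 2 ≤ (pt * S / 4) ^ 2 := by
    rw [hB2]
    have hlam2 : lam ^ 2 ≤ (pt * p' / 8) ^ 2 := by nlinarith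
    have e2 : p' * (N * (lam ^ 2 * ∑ i, (v i) ^ 2))
        = p' * (lam ^ 2 * (N * ∑ i, (u i) ^ 2)) - p' * (lam ^ 2 * S ^ 2) := by
      linear_combination p' * lam ^ 2 * hNv
    have hup : lam ^ 2 * (p' * N * ∑ i, (u i) ^ 2) ≤ lam ^ 2 * (4 * S ^ 2) :=
      mul_le_mul_of_nonneg_left hu2sq (sq_nonneg lam)
    have key : p' * (N * (lam ^ 2 * ∑ i, (v i) ^ 2)) ≤ lam ^ 2 * ((4 - p') * S ^ 2) := by
      linarith [e2, hup]
    have hLnn : 0 ≤ (N : ℝ) * (lam ^ 2 * ∑ i, (v i) ^ 2) := by positivity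
    rcases le_or_gt p' 4 with h4 | h4
    · have h5 : lam ^ 2 * ((4 - p') * S ^ 2) ≤ (pt * p' / 8) ^ 2 * ((4 - p') * S ^ 2) :=
        mul_le_mul_of_nonneg_right hlam2 (mul_nonneg (by linarith) (sq_nonneg S))
      nlinarith [key, h5, mul_nonneg (mul_nonneg (sq_nonneg pt) (sq_nonneg S)) (sq_nonneg (p' - 2)), hp'.le]
    · nlinarith [key, mul_nonneg (sq_nonneg lam) (sq_nonneg S), hLnn, sq_nonneg (pt * S / 4)]
  have hBle : B ≤ pt * S / 4 := by
    have hrhs : 0 ≤ pt * S / 4 := by positivity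
    nlinarith
  have hEle : E ≤ pt * S / 4 := le_trans hEB hBle
  -- final chain
  have hstep1 : ∀ i, c - |A.mulVec v i| ≤ |A.mulVec u i| := by
    intro i
    have h := abs_sub_abs_le_abs_sub c (-(A.mulVec v i))
    rw [abs_neg, sub_neg_eq_add] at h
    have h2 : |c| = c := abs_of_nonneg (by positivity)
    have h3 : |c + A.mulVec v i| = |A.mulVec v i + c| := by rw [add_comm]
    rw [hAu i]
    linarith
  have hsub : ∑ i ∈ Vt, |A.mulVec v i| ≤ E := by
    apply Finset.sum_le_sum_of_subset_of_nonneg (Finset.subset_univ Vt)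
    intro i _ _; exact abs_nonneg _
  have hmain : c * Vt.card - E ≤ ∑ i ∈ Vt, |A.mulVec u i| := by
    calc c * Vt.card - E ≤ c * Vt.card - ∑ i ∈ Vt, |A.mulVec v i| := by linarith
      _ = ∑ i ∈ Vt, (c - |A.mulVec v i|) := by
          rw [Finset.sum_sub_distrib, Finset.sum_const, nsmul_eq_mul]; ring
      _ ≤ ∑ i ∈ Vt, |A.mulVec u i| := Finset.sum_le_sum fun i _ => hstep1 i
  have hcV : pt * S ≤ c * Vt.card := by
    have hcn : 0 ≤ c := by positivity
    calc pt * S = (pt * N) * c := by rw [hc]; field_simp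
      _ ≤ Vt.card * c := mul_le_mul_of_nonneg_right hVt hcn
      _ = c * Vt.card := by ring
  linarith
end

section
/- Let A be a real N×N doubly stochastic symmetric matrix with ‖A u‖_2 ≤ λ ‖u‖_2 for all u orthogonal to the all-ones vector. Let V_t ⊆ [N] with |V_t| = p_t N, and suppose u is a nonnegative vector with ‖u‖_2 ≤ (2/√(p' N)) ‖u‖_1 for some p' > 0, λ ≤ p_t p' / 8, and ‖I_{V_t} A u‖_1 ≥ (3 p_t/4) ‖u‖_1. Then ‖I_{V_t} A u‖_2 ≤ (2/√(p_t N)) ‖I_{V_t} A u‖_1. -/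
private lemma sqrt_sum_sq_add_le {ι : Type*} (s : Finset ι) (f g : ι → ℝ) :
    Real.sqrt (∑ i ∈ s, (f i + g i) ^ 2)
      ≤ Real.sqrt (∑ i ∈ s, f i ^ 2) + Real.sqrt (∑ i ∈ s, g i ^ 2) := by
  have hA : (0:ℝ) ≤ ∑ i ∈ s, f i ^ 2 := Finset.sum_nonneg fun _ _ => sq_nonneg _
  have hB : (0:ℝ) ≤ ∑ i ∈ s, g i ^ 2 := Finset.sum_nonneg fun _ _ => sq_nonneg _
  have hcs := Real.sum_mul_le_sqrt_mul_sqrt s f g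
  have hsqA := Real.sq_sqrt hA
  have hsqB := Real.sq_sqrt hB
  have h1 : ∑ i ∈ s, (f i + g i) ^ 2
      ≤ (Real.sqrt (∑ i ∈ s, f i ^ 2) + Real.sqrt (∑ i ∈ s, g i ^ 2)) ^ 2 := by
    have : ∑ i ∈ s, (f i + g i) ^ 2
        = (∑ i ∈ s, f i ^ 2) + 2 * (∑ i ∈ s, f i * g i) + ∑ i ∈ s, g i ^ 2 := by
      simp only [add_sq, Finset.sum_add_distrib, Finset.mul_sum]
      ring_nf
    rw [this]; nlinarith [hcs, hsqA, hsqB]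
  calc Real.sqrt (∑ i ∈ s, (f i + g i) ^ 2)
      ≤ Real.sqrt ((Real.sqrt (∑ i ∈ s, f i ^ 2) + Real.sqrt (∑ i ∈ s, g i ^ 2)) ^ 2) :=
        Real.sqrt_le_sqrt h1
    _ = _ := Real.sqrt_sq (by positivity)

private lemma aux_e2 (a b : ℝ) (hb : b ≠ 0) :
    2 * (a / b) * a - b * (a / b) ^ 2 = a ^ 2 / b := by field_simp; ring

private lemma aux_fin (l q : ℝ) (hq : q ≠ 0) :
    2 / q * l = 4 / 3 * l / q + 2 / 3 * l / q := by field_simp; ring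

set_option maxHeartbeats 2000000 in
theorem stmt_15 (N : ℕ) (hN : 0 < N) (A : Matrix (Fin N) (Fin N) ℝ)
    (hDS : A ∈ doublyStochastic ℝ (Fin N)) (hsymm : A.IsSymm)
    (lam : ℝ)
    (hspec : ∀ u : Fin N → ℝ, ∑ i, u i = 0 →
      Real.sqrt (∑ i, (A.mulVec u i) ^ 2) ≤ lam * Real.sqrt (∑ i, (u i) ^ 2))
    (Vt : Finset (Fin N)) (pt p' : ℝ) (hp' : 0 < p')
    (hVt : (Vt.card : ℝ) = pt * N)
    (u : Fin N → ℝ) (hu : ∀ i, 0 ≤ u i)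
    (hu2 : Real.sqrt (∑ i, (u i) ^ 2) ≤ 2 / Real.sqrt (p' * N) * ∑ i, |u i|)
    (hl : lam ≤ pt * p' / 8)
    (hlow : ∑ i ∈ Vt, |A.mulVec u i| ≥ 3 * pt / 4 * ∑ i, |u i|) :
    Real.sqrt (∑ i ∈ Vt, (A.mulVec u i) ^ 2)
      ≤ 2 / Real.sqrt (pt * N) * ∑ i ∈ Vt, |A.mulVec u i| := by
  classical
  obtain ⟨hA0, hrow, -⟩ := (mem_doublyStochastic_iff_sum).mp hDS
  have hNR : (0:ℝ) < (N:ℝ) := by exact_mod_cast hN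
  set S := ∑ i, u i with hS
  have hSabs : ∑ i, |u i| = S := by
    simp only [hS]; exact Finset.sum_congr rfl fun i _ => abs_of_nonneg (hu i)
  rw [hSabs] at hu2 hlow
  set L := ∑ i ∈ Vt, |A.mulVec u i| with hL
  have hL0 : 0 ≤ L := Finset.sum_nonneg fun i _ => abs_nonneg _
  clear_value S L
  -- trivial case : Vt empty
  rcases Vt.eq_empty_or_nonempty with hVe | hVne
  · subst hVe; simp [hL]
  have hptpos : 0 < pt := by
    have h1 : (1:ℝ) ≤ (Vt.card : ℝ) := by exact_mod_cast (Finset.card_pos.mpr hVne)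
    nlinarith [hVt]
  -- trivial case : u = 0
  have hS0 : 0 ≤ S := hS ▸ Finset.sum_nonneg fun i _ => hu i
  rcases eq_or_lt_of_le hS0 with hSz | hSpos
  · have hu0 : ∀ i, u i = 0 := by
      intro i
      have hz : ∑ i, u i = 0 := by rw [← hS]; exact hSz.symm
      exact (Finset.sum_eq_zero_iff_of_nonneg (fun i _ => hu i)).mp hz i (Finset.mem_univ i)
    have : ∀ i, A.mulVec u i = 0 := by
      intro i
      simp only [Matrix.mulVec, dotProduct]
      exact Finset.sum_eq_zero fun j _ => by rw [hu0 j, mul_zero]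
    simp [this, hL]
  -- main case
  have hptN : (0:ℝ) < pt * N := by positivity
  set Q := Real.sqrt (pt * N) with hQ
  have hQpos : 0 < Q := Real.sqrt_pos.mpr hptN
  have hQsq : Q ^ 2 = pt * N := Real.sq_sqrt hptN.le
  set R := Real.sqrt (p' * N) with hR
  have hRpos : 0 < R := Real.sqrt_pos.mpr (by positivity)
  have hRsq : R ^ 2 = p' * N := Real.sq_sqrt (by positivity)
  clear_value Q R
  -- pt ≤ 1
  have hpt1 : pt ≤ 1 := by
    have hc : Vt.card ≤ N := by simpa using Finset.card_le_univ Vt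
    have : (Vt.card : ℝ) ≤ (N:ℝ) := by exact_mod_cast hc
    nlinarith [hVt]
  -- Cauchy-Schwarz : S ≤ √N * √(∑ u²)
  have hCS : S ≤ Real.sqrt N * Real.sqrt (∑ i, (u i) ^ 2) := by
    have := Real.sum_mul_le_sqrt_mul_sqrt Finset.univ (fun _ => (1:ℝ)) u
    simpa [Finset.card_univ, hS] using this
  -- p' ≤ 4
  have hp4 : p' ≤ 4 := by
    have h1 : S ≤ Real.sqrt N * (2 / R * S) :=
      hCS.trans (by
        have := Real.sqrt_nonneg (N:ℝ)
        exact mul_le_mul_of_nonneg_left hu2 this)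
    have hsN : Real.sqrt (N:ℝ) ^ 2 = (N:ℝ) := Real.sq_sqrt hNR.le
    have hsNpos : 0 < Real.sqrt (N:ℝ) := Real.sqrt_pos.mpr hNR
    -- from h1 : R ≤ 2 √N
    have h2 : R ≤ 2 * Real.sqrt (N:ℝ) := by
      by_contra hcon
      push_neg at hcon
      have : Real.sqrt N * (2 / R * S) < S := by
        rw [show Real.sqrt N * (2 / R * S) = (2 * Real.sqrt N / R) * S by ring]
        have : 2 * Real.sqrt N / R < 1 := by
          rw [div_lt_one hRpos]; linarith
        nlinarith
      linarith
    nlinarith [hRsq, hsN]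
  -- S ≤ 4/(3 pt) L, i.e. 3 pt S ≤ 4 L
  have hSL : 3 * pt * S ≤ 4 * L := by nlinarith [hlow]
  -- decomposition
  set c := S / N with hc
  clear_value c
  set w : Fin N → ℝ := fun i => u i - c with hw
  clear_value w
  have hwsum : ∑ i, w i = 0 := by
    simp only [hw, Finset.sum_sub_distrib, Finset.sum_const, Finset.card_univ,
      Fintype.card_fin, nsmul_eq_mul, hc, ← hS]
    field_simp
    ring
  have hAu : ∀ i, A.mulVec u i = c + A.mulVec w i := by
    intro i
    simp only [Matrix.mulVec, dotProduct, hw]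
    have : ∑ j, A i j * (u j - c) = (∑ j, A i j * u j) - c * ∑ j, A i j := by
      rw [Finset.mul_sum, ← Finset.sum_sub_distrib]; congr 1; ext j; ring
    rw [this, hrow i]; ring
  -- w norm ≤ u norm
  have hwnorm : ∑ i, w i ^ 2 ≤ ∑ i, (u i) ^ 2 := by
    have key : ∑ i, w i ^ 2 = (∑ i, (u i) ^ 2) - 2 * c * S + (N:ℝ) * c ^ 2 := by
      have e1 : ∀ i : Fin N, w i ^ 2 = u i ^ 2 - 2 * c * u i + c ^ 2 := by
        intro i; simp only [hw]; ring
      rw [Finset.sum_congr rfl fun i _ => e1 i, Finset.sum_add_distrib,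
        Finset.sum_sub_distrib, ← Finset.mul_sum, Finset.sum_const,
        Finset.card_univ, Fintype.card_fin, nsmul_eq_mul, ← hS]
    rw [key, hc]
    have e2 : 2 * (S / N) * S - (N:ℝ) * (S / N) ^ 2 = S ^ 2 / N := aux_e2 S N hNR.ne'
    have e3 : 0 ≤ S ^ 2 / (N:ℝ) := by positivity
    linarith [e2, e3]
  -- perpendicular bound
  have hperp : Real.sqrt (∑ i ∈ Vt, (A.mulVec w i) ^ 2) ≤ 2 / 3 * L / Q := by
    have hsub : Real.sqrt (∑ i ∈ Vt, (A.mulVec w i) ^ 2)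
        ≤ Real.sqrt (∑ i, (A.mulVec w i) ^ 2) :=
      Real.sqrt_le_sqrt (Finset.sum_le_sum_of_subset_of_nonneg (Finset.subset_univ Vt)
        (fun i _ _ => sq_nonneg _))
    have hsp := hspec w hwsum
    rcases le_or_gt lam 0 with hlneg | hlpos
    · have : Real.sqrt (∑ i, (A.mulVec w i) ^ 2) ≤ 0 := by
        have := Real.sqrt_nonneg (∑ i, w i ^ 2)
        nlinarith [hsp]
      have hperp0 : Real.sqrt (∑ i ∈ Vt, (A.mulVec w i) ^ 2) ≤ 0 := hsub.trans this
      have : 0 ≤ 2 / 3 * L / Q := by positivity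
      linarith
    · have h1 : lam * Real.sqrt (∑ i, w i ^ 2) ≤ lam * Real.sqrt (∑ i, (u i) ^ 2) :=
        mul_le_mul_of_nonneg_left (Real.sqrt_le_sqrt hwnorm) hlpos.le
      have h2 : lam * Real.sqrt (∑ i, (u i) ^ 2) ≤ lam * (2 / R * S) :=
        mul_le_mul_of_nonneg_left hu2 hlpos.le
      have h3 : lam * (2 / R * S) ≤ (pt * p' / 8) * (2 / R * S) := by
        have : 0 ≤ 2 / R * S := by positivity
        nlinarith
      -- now show (pt p'/8)(2/R)S ≤ (2/3) L / Q
      have hpQ : p' * Q ≤ 2 * R := by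
        have hsq : (p' * Q) ^ 2 ≤ (2 * R) ^ 2 := by
          rw [mul_pow, mul_pow, hQsq, hRsq]
          nlinarith [mul_nonneg (mul_nonneg (sub_nonneg.2 hp4) hp'.le)
              (mul_pos hptpos hNR).le,
            mul_nonneg (sub_nonneg.2 hpt1) (mul_pos hp' hNR).le]
        calc p' * Q = Real.sqrt ((p' * Q) ^ 2) := (Real.sqrt_sq (by positivity)).symm
          _ ≤ Real.sqrt ((2 * R) ^ 2) := Real.sqrt_le_sqrt hsq
          _ = 2 * R := Real.sqrt_sq (by positivity)
      have hkey : 3 * (pt * p' * S * Q) ≤ 8 * (L * R) := by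
        have f1 : (3 * pt * S) * (p' * Q) ≤ (4 * L) * (p' * Q) :=
          mul_le_mul_of_nonneg_right hSL (mul_nonneg hp'.le hQpos.le)
        have f2 : (4 * L) * (p' * Q) ≤ (4 * L) * (2 * R) :=
          mul_le_mul_of_nonneg_left hpQ (by linarith)
        nlinarith [f1, f2]
      have h4 : (pt * p' / 8) * (2 / R * S) ≤ 2 / 3 * L / Q := by
        rw [show (pt * p' / 8) * (2 / R * S) = (pt * p' * S / 4) / R by ring,
          show 2 / 3 * L / Q = (2 / 3 * L) / Q by ring, div_le_div_iff₀ hRpos hQpos]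
        nlinarith [hkey]
      calc Real.sqrt (∑ i ∈ Vt, (A.mulVec w i) ^ 2)
          ≤ Real.sqrt (∑ i, (A.mulVec w i) ^ 2) := hsub
        _ ≤ lam * Real.sqrt (∑ i, w i ^ 2) := hsp
        _ ≤ 2 / 3 * L / Q := by linarith
  -- parallel bound
  have hpar : Real.sqrt (∑ i ∈ Vt, (c:ℝ) ^ 2) ≤ 4 / 3 * L / Q := by
    have hcnn : 0 ≤ c := by rw [hc]; positivity
    have : ∑ i ∈ Vt, (c:ℝ) ^ 2 = pt * N * c ^ 2 := by
      rw [Finset.sum_const, nsmul_eq_mul, hVt]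
    rw [this]
    have : Real.sqrt (pt * N * c ^ 2) = Q * c := by
      rw [Real.sqrt_mul hptN.le, Real.sqrt_sq hcnn, hQ]
    rw [this]
    rw [show 4 / 3 * L / Q = (4 / 3 * L) / Q by ring, le_div_iff₀ hQpos]
    have hQQ : Q * c * Q = pt * S := by
      have : Q * c * Q = Q ^ 2 * c := by ring
      rw [this, hQsq, hc]; field_simp
    rw [hQQ]
    linarith [hSL]
  -- combine
  have hdecomp : Real.sqrt (∑ i ∈ Vt, (A.mulVec u i) ^ 2)
      ≤ Real.sqrt (∑ i ∈ Vt, (c:ℝ) ^ 2) + Real.sqrt (∑ i ∈ Vt, (A.mulVec w i) ^ 2) := by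
    have : ∀ i, A.mulVec u i = c + A.mulVec w i := hAu
    calc Real.sqrt (∑ i ∈ Vt, (A.mulVec u i) ^ 2)
        = Real.sqrt (∑ i ∈ Vt, ((fun _ => c) i + A.mulVec w i) ^ 2) := by
          congr 1; exact Finset.sum_congr rfl fun i _ => by rw [hAu i]
      _ ≤ _ := sqrt_sum_sq_add_le Vt _ _
  have hfin : 2 / Q * L = 4 / 3 * L / Q + 2 / 3 * L / Q := aux_fin L Q hQpos.ne'
  calc Real.sqrt (∑ i ∈ Vt, (A.mulVec u i) ^ 2)
      ≤ Real.sqrt (∑ i ∈ Vt, (c:ℝ) ^ 2) + Real.sqrt (∑ i ∈ Vt, (A.mulVec w i) ^ 2) := hdecomp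
    _ ≤ 4 / 3 * L / Q + 2 / 3 * L / Q := add_le_add hpar hperp
    _ = 2 / Q * L := hfin.symm
end

section
/- Let p_1,...,p_n ∈ [0,1], let t ≤ n be a positive integer, and let H be a finite family of functions h : [n] → [t] such that for every t-element subset T ⊆ [n], Pr_{h ∈ H}[h is injective on T] ≥ β. Then E_{h ∈ H}[∏_{i=1}^t ∑_{j ∈ h^{-1}(i)} p_j] ≥ β · ∑_{T ⊆ [n], |T| = t} ∏_{j ∈ T} p_j. -/
open Finset

theorem stmt_18 (n t : ℕ) (ht : 0 < t) (htn : t ≤ n)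
    (p : Fin n → ℝ) (hp0 : ∀ i, 0 ≤ p i) (hp1 : ∀ i, p i ≤ 1)
    (H : Finset (Fin n → Fin t)) (hH : H.Nonempty) (β : ℝ)
    (hinj : ∀ T : Finset (Fin n), T.card = t →
      ((H.filter (fun h => Set.InjOn h ↑T)).card : ℝ) / H.card ≥ β) :
    (∑ h ∈ H, ∏ i : Fin t, ∑ j ∈ Finset.univ.filter (fun j => h j = i), p j) / H.card
      ≥ β * ∑ T ∈ Finset.univ.powersetCard t, ∏ j ∈ T, p j := by
  classical
  have hHcard : (0:ℝ) < H.card := by exact_mod_cast Finset.card_pos.mpr hH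
  set P := (Finset.univ : Finset (Fin n)).powersetCard t with hP
  -- Step 1: per-h identity
  have key : ∀ h : Fin n → Fin t,
      ∏ i : Fin t, ∑ j ∈ Finset.univ.filter (fun j => h j = i), p j
      = ∑ T ∈ P.filter (fun T : Finset (Fin n) => Set.InjOn h ↑T), ∏ j ∈ T, p j := by
    intro h
    rw [Finset.prod_univ_sum]
    refine Finset.sum_bij (fun g _ => Finset.image g Finset.univ) ?_ ?_ ?_ ?_
    · intro g hg
      have hg' : ∀ i, h (g i) = i := by
        intro i
        have := (Fintype.mem_piFinset.mp hg) i
        simpa using this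
      have ginj : Function.Injective g := fun a b hab => by
        have := congrArg h hab; rwa [hg', hg'] at this
      rw [Finset.mem_filter]
      constructor
      · rw [hP, Finset.mem_powersetCard_univ, Finset.card_image_of_injective _ ginj,
          Finset.card_univ, Fintype.card_fin]
      · intro a ha b hb hab
        simp only [Finset.coe_image, Set.mem_image] at ha hb
        obtain ⟨i, -, rfl⟩ := ha
        obtain ⟨i', -, rfl⟩ := hb
        rw [hg', hg'] at hab
        rw [hab]
    · intro g1 hg1 g2 hg2 himg
      have hg1' : ∀ i, h (g1 i) = i := fun i => by
        have := (Fintype.mem_piFinset.mp hg1) i; simpa using this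
      have hg2' : ∀ i, h (g2 i) = i := fun i => by
        have := (Fintype.mem_piFinset.mp hg2) i; simpa using this
      funext i
      have himg' : Finset.image g1 Finset.univ = Finset.image g2 Finset.univ := himg
      have : g1 i ∈ Finset.image g2 Finset.univ := by
        rw [← himg']; exact Finset.mem_image_of_mem _ (Finset.mem_univ i)
      obtain ⟨i', -, hi'⟩ := Finset.mem_image.mp this
      have : i' = i := by rw [← hg2' i', hi', hg1']
      rw [← hi', this]
    · intro T hT
      rw [Finset.mem_filter, hP, Finset.mem_powersetCard_univ] at hT
      obtain ⟨hTcard, hTinj⟩ := hT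
      have himg : Finset.image h T = Finset.univ := by
        apply Finset.eq_univ_of_card
        rw [Finset.card_image_of_injOn hTinj, hTcard, Fintype.card_fin]
      have hex : ∀ i : Fin t, ∃ j, j ∈ T ∧ h j = i := by
        intro i
        have : i ∈ Finset.image h T := by rw [himg]; exact Finset.mem_univ i
        obtain ⟨j, hj, hji⟩ := Finset.mem_image.mp this
        exact ⟨j, hj, hji⟩
      choose g hgT hgh using hex
      have ginj : Function.Injective g := fun a b hab => by
        have := congrArg h hab; rwa [hgh, hgh] at this
      refine ⟨g, ?_, ?_⟩
      · rw [Fintype.mem_piFinset]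
        intro i; simp [hgh i]
      · apply Finset.eq_of_subset_of_card_le
        · intro x hx
          obtain ⟨i, -, rfl⟩ := Finset.mem_image.mp hx
          exact hgT i
        · rw [Finset.card_image_of_injective _ ginj, Finset.card_univ, Fintype.card_fin,
            hTcard]
    · intro g hg
      have hg' : ∀ i, h (g i) = i := fun i => by
        have := (Fintype.mem_piFinset.mp hg) i; simpa using this
      have ginj : Function.Injective g := fun a b hab => by
        have := congrArg h hab; rwa [hg', hg'] at this
      rw [Finset.prod_image (fun a _ b _ hab => ginj hab)]
  -- Step 2: swap sums
  have swap : ∑ h ∈ H, ∑ T ∈ P.filter (fun T : Finset (Fin n) => Set.InjOn h ↑T), ∏ j ∈ T, p j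
      = ∑ T ∈ P, ((H.filter (fun h => Set.InjOn h ↑T)).card : ℝ) * ∏ j ∈ T, p j := by
    simp_rw [Finset.sum_filter]
    rw [Finset.sum_comm]
    refine Finset.sum_congr rfl fun T _ => ?_
    rw [← Finset.sum_filter, Finset.sum_const, nsmul_eq_mul]
  have hnum : ∑ h ∈ H, ∏ i : Fin t, ∑ j ∈ Finset.univ.filter (fun j => h j = i), p j
      = ∑ T ∈ P, ((H.filter (fun h => Set.InjOn h ↑T)).card : ℝ) * ∏ j ∈ T, p j := by
    rw [← swap]; exact Finset.sum_congr rfl fun h _ => key h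
  rw [hnum, Finset.sum_div]
  rw [Finset.mul_sum]
  refine Finset.sum_le_sum fun T hT => ?_
  have hTcard : T.card = t := (Finset.mem_powersetCard_univ.mp hT)
  have hprod : 0 ≤ ∏ j ∈ T, p j := Finset.prod_nonneg fun j _ => hp0 j
  rw [mul_div_right_comm]
  exact mul_le_mul_of_nonneg_right (hinj T hTcard) hprod
end
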